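/- Let g = a·tⁱ with a ∈ A and i > 0, and let b ∈ A with b ≠ 1. Then there exists a finite-index normal subgroup Ḡ of G such that ⟨g⟩·Ḡ ∩ A = Ḡ ∩ A and b ∉ Ḡ, where ⟨g⟩ denotes the cyclic subgroup of G generated by g (note ⟨g⟩·Ḡ is a subgroup since Ḡ is normal). -/

import Mathlib

open Subgroup Pointwise

/-- The free abelian group of rank `n`, written multiplicatively. -/
abbrev FreeAb (n : ℕ) : Type := Multiplicative (Fin n → ℤ)

/-- The isomorphism from `A = ⊤` onto the image `φ(A)` induced by an injective
endomorphism `φ` of the free abelian group `A`. -/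
noncomputable def ascIso {n : ℕ} (φ : FreeAb n →* FreeAb n) (hφ : Function.Injective φ) :
    (⊤ : Subgroup (FreeAb n)) ≃* φ.range :=
  Subgroup.topEquiv.trans (MonoidHom.ofInjective hφ)

/-- The ascending HNN extension `G = A∗_φ = ⟨A, t ∣ t·a·t⁻¹ = φ(a) for a ∈ A⟩`,
realized as the HNN extension of `A` over the subgroups `⊤` and `φ.range`. -/
abbrev AscHNN {n : ℕ} (φ : FreeAb n →* FreeAb n) (hφ : Function.Injective φ) : Type :=
  HNNExtension (FreeAb n) ⊤ φ.range (ascIso φ hφ)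

section Aux

open SemidirectProduct

theorem sdp_pow {N G : Type*} [CommGroup N] [Group G] {φ : G →* MulAut N}
    (v : N) (s : G) (m : ℕ) :
    ((inl v * inr s : N ⋊[φ] G)) ^ m =
      inl (∏ l ∈ Finset.range m, φ (s ^ l) v) * inr (s ^ m) := by
  induction m with
  | zero => simp
  | succ m ih =>
      rw [pow_succ, ih, Finset.prod_range_succ, pow_succ]
      ext <;>
        simp [mul_left, mul_right, left_inl, right_inl, left_inr, right_inr, map_mul, ← map_pow,
          mul_assoc]

theorem prod_range_mul_periodic {V : Type*} [CommMonoid V] (f : ℕ → V) (d : ℕ)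
    (hf : ∀ l, f (l + d) = f l) (j : ℕ) :
    ∏ l ∈ Finset.range (j * d), f l = (∏ r ∈ Finset.range d, f r) ^ j := by
  induction j with
  | zero => simp
  | succ j ih =>
      have h3 : ∀ x k, f (x + k * d) = f x := by
        intro x k
        induction k with
        | zero => simp
        | succ k ihk => rw [Nat.succ_mul, ← add_assoc, hf, ihk]
      rw [Nat.succ_mul, Finset.prod_range_add, ih, pow_succ]
      congr 1
      refine Finset.prod_congr rfl fun x _ => ?_
      rw [show j * d + x = x + j * d by ring, h3]

end Aux

/-- Let `g = a·t^i` with `a ∈ A`, `i > 0`, and let `b ∈ A` with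
`b ≠ 1`.  Then there is a finite-index normal subgroup `Gbar` of `G = A∗_φ` such that
`⟨g⟩·Gbar ∩ A = Gbar ∩ A` and `b ∉ Gbar`. -/
theorem stmt_4 (n : ℕ) (hn : 1 ≤ n)
    (φ : FreeAb n →* FreeAb n) (hφ : Function.Injective φ)
    (a : FreeAb n) (i : ℕ) (hi : 0 < i)
    (b : FreeAb n) (hb : b ≠ 1) :
    ∃ Gbar : Subgroup (AscHNN φ hφ), Gbar.Normal ∧ Gbar.FiniteIndex ∧
      (∀ c : FreeAb n,
        (HNNExtension.of c : AscHNN φ hφ) ∈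
            ((Subgroup.zpowers ((HNNExtension.of a : AscHNN φ hφ) *
                (HNNExtension.t : AscHNN φ hφ) ^ i) : Set (AscHNN φ hφ)) *
              (Gbar : Set (AscHNN φ hφ))) ↔
          (HNNExtension.of c : AscHNN φ hφ) ∈ Gbar) ∧
      (HNNExtension.of b : AscHNN φ hφ) ∉ Gbar := by

  classical
  -- the matrix of φ
  set fA : (Fin n → ℤ) →+ (Fin n → ℤ) := MonoidHom.toAdditive φ with hfA
  set M : Matrix (Fin n) (Fin n) ℤ := LinearMap.toMatrix' fA.toIntLinearMap with hM
  have hφM : ∀ v : Fin n → ℤ,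
      Multiplicative.toAdd (φ (Multiplicative.ofAdd v)) = M.mulVec v := by
    intro v
    have h1 : M.mulVec v = Matrix.toLin' M v := (Matrix.toLin'_apply _ _).symm
    rw [h1, hM, Matrix.toLin'_toMatrix']
    rfl
  have hdet : M.det ≠ 0 := by
    intro h0
    obtain ⟨v, hv, hv0⟩ := Matrix.exists_mulVec_eq_zero_iff.mpr h0
    apply hv
    have h1 : φ (Multiplicative.ofAdd v) = 1 := by
      have h2 := hφM v
      rw [hv0] at h2
      exact toAdd_eq_zero.mp h2
    have h3 : Multiplicative.ofAdd v = 1 := hφ (by rw [h1, map_one])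
    exact ofAdd_eq_one.mp h3
  obtain ⟨j, hj⟩ : ∃ j, Multiplicative.toAdd b j ≠ 0 := by
    by_contra h
    push_neg at h
    exact hb (toAdd_eq_zero.mp (funext h))
  -- a large prime
  obtain ⟨p, hple, hp⟩ :=
    Nat.exists_infinite_primes (max M.det.natAbs (Multiplicative.toAdd b j).natAbs + 1)
  haveI : Fact p.Prime := ⟨hp⟩
  have hnd : ∀ m : ℤ, m ≠ 0 → m.natAbs < p → ¬ (p : ℤ) ∣ m := by
    intro m hm hlt hdvd
    have h1 : p ∣ m.natAbs := by
      have := Int.natAbs_dvd_natAbs.mpr hdvd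
      simpa using this
    exact absurd (Nat.le_of_dvd (Int.natAbs_pos.mpr hm) h1) (not_le.mpr hlt)
  have hpd : ¬ (p : ℤ) ∣ M.det := hnd _ hdet (lt_of_lt_of_le (Nat.lt_succ_of_le (le_max_left _ _)) hple)
  have hpb : ¬ (p : ℤ) ∣ Multiplicative.toAdd b j := hnd _ hj (lt_of_lt_of_le (Nat.lt_succ_of_le (le_max_right _ _)) hple)
  -- reduction mod p
  set Mp : Matrix (Fin n) (Fin n) (ZMod p) := M.map (Int.castRingHom (ZMod p)) with hMp
  have hMpdet : IsUnit Mp.det := by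
    have h1 : Mp.det = ((M.det : ℤ) : ZMod p) := by
      rw [hMp]
      exact ((Int.castRingHom (ZMod p)).map_det M).symm
    rw [h1]
    have h2 : ((M.det : ℤ) : ZMod p) ≠ 0 := fun h =>
      hpd ((ZMod.intCast_zmod_eq_zero_iff_dvd _ _).mp h)
    exact h2.isUnit
  haveI hMpInv : Invertible Mp := Mp.invertibleOfIsUnitDet hMpdet
  set e := Mp.toLinearEquiv' hMpInv with he0
  have he : ∀ v, e v = Mp.mulVec v := by
    intro v
    rw [he0]
    show Matrix.toLin' Mp v = _
    exact Matrix.toLin'_apply Mp v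
  set θ : MulAut (Multiplicative (Fin n → ZMod p)) :=
    AddEquiv.toMultiplicative e.toAddEquiv with hθ0
  have hθapp : ∀ x, θ x = Multiplicative.ofAdd (Mp.mulVec (Multiplicative.toAdd x)) := by
    intro x
    rw [hθ0]
    show Multiplicative.ofAdd (e (Multiplicative.toAdd x)) = _
    rw [he]
  haveI hfinV : Finite (Multiplicative (Fin n → ZMod p)) := by
    unfold Multiplicative
    infer_instance
  haveI : Finite (MulAut (Multiplicative (Fin n → ZMod p))) :=
    Finite.of_injective (fun g => (g : Multiplicative (Fin n → ZMod p) → Multiplicative (Fin n → ZMod p)))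
      fun g h hgh => by exact DFunLike.ext _ _ fun x => congrFun hgh x
  set d : ℕ := orderOf θ with hd0
  have hdpos : 0 < d := orderOf_pos θ
  have hθd : θ ^ d = 1 := pow_orderOf_eq_one θ
  set Nn : ℕ := i * d * p with hNn
  have hNpos : 0 < Nn := Nat.mul_pos (Nat.mul_pos hi hdpos) hp.pos
  haveI : NeZero Nn := ⟨hNpos.ne'⟩
  -- the action of ZMod Nn
  have hθNn : (zmultiplesHom (Additive (MulAut (Multiplicative (Fin n → ZMod p))))
      (Additive.ofMul θ)) (Nn : ℤ) = 0 := by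
    show (Nn : ℤ) • Additive.ofMul θ = 0
    rw [← ofMul_zpow, zpow_natCast, hNn]
    show Additive.ofMul (θ ^ (i * d * p)) = 0
    rw [show i * d * p = d * (i * p) by ring, pow_mul, hθd, one_pow]
    rfl
  set act : Multiplicative (ZMod Nn) →* MulAut (Multiplicative (Fin n → ZMod p)) :=
    AddMonoidHom.toMultiplicativeLeft
      (ZMod.lift Nn ⟨zmultiplesHom _ (Additive.ofMul θ), hθNn⟩) with hact0
  have hact_int : ∀ m : ℤ, act (Multiplicative.ofAdd ((m : ZMod Nn))) = θ ^ m := by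
    intro m
    rw [hact0]
    show Additive.toMul ((ZMod.lift Nn ⟨zmultiplesHom _ (Additive.ofMul θ), hθNn⟩)
      ((m : ZMod Nn))) = θ ^ m
    rw [ZMod.lift_coe]
    show Additive.toMul (m • Additive.ofMul θ) = θ ^ m
    rw [← ofMul_zpow]
    rfl
  -- the finite group F and the homomorphisms into it
  haveI hfinC : Finite (Multiplicative (ZMod Nn)) := by
    unfold Multiplicative
    infer_instance
  haveI hfinF : Finite
      ((Multiplicative (Fin n → ZMod p)) ⋊[act] (Multiplicative (ZMod Nn))) :=
    Finite.of_injective (fun x => (x.left, x.right))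
      (fun x y h => SemidirectProduct.ext (congrArg Prod.fst h) (congrArg Prod.snd h))
  set redA : (Fin n → ℤ) →+ (Fin n → ZMod p) :=
    AddMonoidHom.mk' (fun v k => ((v k : ℤ) : ZMod p)) (by
      intro v w
      funext k
      simp) with hredA
  set red : FreeAb n →* Multiplicative (Fin n → ZMod p) :=
    AddMonoidHom.toMultiplicative redA with hred
  have hred_apply : ∀ x : FreeAb n,
      Multiplicative.toAdd (red x) = redA (Multiplicative.toAdd x) := fun _ => rfl
  set fH : FreeAb n →* (Multiplicative (Fin n → ZMod p)) ⋊[act] (Multiplicative (ZMod Nn)) :=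
    SemidirectProduct.inl.comp red with hfH
  set τ : (Multiplicative (Fin n → ZMod p)) ⋊[act] (Multiplicative (ZMod Nn)) :=
    SemidirectProduct.inr (Multiplicative.ofAdd (1 : ZMod Nn)) with hτ
  have hθred : ∀ x : FreeAb n, θ (red x) = red (φ x) := by
    intro x
    apply Multiplicative.toAdd.injective
    rw [hθapp, hred_apply]
    show Mp.mulVec (redA (Multiplicative.toAdd x)) = redA (Multiplicative.toAdd (φ x))
    have h1 : Multiplicative.toAdd (φ x) = M.mulVec (Multiplicative.toAdd x) := hφM _
    rw [h1]
    funext k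
    have hk := RingHom.map_mulVec (Int.castRingHom (ZMod p)) M (Multiplicative.toAdd x) k
    exact hk.symm
  have hcompat : ∀ aa : (⊤ : Subgroup (FreeAb n)),
      τ * fH ↑aa = fH ↑((ascIso φ hφ) aa) * τ := by
    intro aa
    have h1 : (↑((ascIso φ hφ) aa) : FreeAb n) = φ ↑aa := rfl
    rw [h1]
    show τ * SemidirectProduct.inl (red ↑aa) = SemidirectProduct.inl (red (φ ↑aa)) * τ
    have key : act (Multiplicative.ofAdd (1 : ZMod Nn)) (red ↑aa) = red (φ ↑aa) := by
      have h2 : (1 : ZMod Nn) = ((1 : ℤ) : ZMod Nn) := by norm_num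
      rw [h2, hact_int 1, zpow_one, hθred]
    rw [← key, hτ, SemidirectProduct.inl_aut]
    simp [mul_assoc, ← map_mul]
  set ψ : AscHNN φ hφ →*
      (Multiplicative (Fin n → ZMod p)) ⋊[act] (Multiplicative (ZMod Nn)) :=
    HNNExtension.lift fH τ hcompat with hψ
  have hψof : ∀ x : FreeAb n, ψ (HNNExtension.of x) = SemidirectProduct.inl (red x) :=
    fun x => HNNExtension.lift_of fH τ hcompat x
  have hψt : ψ HNNExtension.t = τ := HNNExtension.lift_t fH τ hcompat
  set si : Multiplicative (ZMod Nn) := Multiplicative.ofAdd ((i : ℕ) : ZMod Nn) with hsi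
  have hτi : τ ^ i = SemidirectProduct.inr si := by
    rw [hτ, ← map_pow]
    congr 1
    rw [hsi, ← ofAdd_nsmul]
    congr 1
    simp
  have hψg : ψ (HNNExtension.of a * HNNExtension.t ^ i)
      = SemidirectProduct.inl (red a) * SemidirectProduct.inr si := by
    rw [map_mul, map_pow, hψof, hψt, hτi]
  -- Step A : (ψ g) ^ (d * p) = 1
  have hsil : ∀ l : ℕ, act (si ^ l) = θ ^ (l * i) := by
    intro l
    have h1 : si ^ l = Multiplicative.ofAdd (((l * i : ℕ) : ℤ) : ZMod Nn) := by
      rw [hsi, ← ofAdd_nsmul]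
      congr 1
      push_cast
      ring
    rw [h1, hact_int, zpow_natCast]
  have hVp : ∀ x : Multiplicative (Fin n → ZMod p), x ^ p = 1 := by
    intro x
    refine toAdd_eq_zero.mp ?_
    rw [toAdd_pow]
    funext k
    simp [ZMod.natCast_self]
  have hprod : ∏ l ∈ Finset.range (d * p), (θ ^ (l * i)) (red a) = 1 := by
    have hper : ∀ l, (θ ^ ((l + d) * i)) (red a) = (θ ^ (l * i)) (red a) := by
      intro l
      rw [add_mul, pow_add, pow_mul θ d i, hθd, one_pow, MulAut.mul_apply, MulAut.one_apply]
    calc ∏ l ∈ Finset.range (d * p), (θ ^ (l * i)) (red a)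
        = ∏ l ∈ Finset.range (p * d), (θ ^ (l * i)) (red a) := by rw [mul_comm]
      _ = (∏ r ∈ Finset.range d, (θ ^ (r * i)) (red a)) ^ p :=
          prod_range_mul_periodic _ d hper p
      _ = 1 := hVp _
  have hA : (SemidirectProduct.inl (red a) * SemidirectProduct.inr si :
      (Multiplicative (Fin n → ZMod p)) ⋊[act] (Multiplicative (ZMod Nn))) ^ (d * p) = 1 := by
    rw [sdp_pow]
    have h1 : ∏ l ∈ Finset.range (d * p), act (si ^ l) (red a) = 1 := by
      rw [Finset.prod_congr rfl fun l _ => by rw [hsil l]]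
      exact hprod
    have h2 : si ^ (d * p) = 1 := by
      rw [hsi, ← ofAdd_nsmul]
      refine ofAdd_eq_one.mpr ?_
      have h3 : (d * p) • ((i : ℕ) : ZMod Nn) = ((d * p * i : ℕ) : ZMod Nn) := by
        rw [nsmul_eq_mul]
        push_cast
        ring
      rw [h3]
      refine (ZMod.natCast_eq_zero_iff _ _).mpr ?_
      exact Dvd.intro_left 1 (by rw [hNn]; ring)
    rw [h1, h2]
    simp
  -- conclusion
  refine ⟨ψ.ker, MonoidHom.normal_ker ψ, inferInstance, ?_, ?_⟩
  · intro c
    constructor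
    · intro hmem
      rw [Set.mem_mul] at hmem
      obtain ⟨x, hx, y, hy, hxy⟩ := hmem
      obtain ⟨k, rfl⟩ := Subgroup.mem_zpowers_iff.mp (SetLike.mem_coe.mp hx)
      have hyk : ψ y = 1 := SetLike.mem_coe.mp hy
      have heq : ψ (HNNExtension.of c)
          = (SemidirectProduct.inl (red a) * SemidirectProduct.inr si) ^ k := by
        rw [← hxy, map_mul, map_zpow, hyk, mul_one, hψg]
      have hsk : si ^ k = 1 := by
        have h1 := congrArg SemidirectProduct.rightHom heq
        rw [hψof, SemidirectProduct.rightHom_inl, map_zpow, map_mul,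
          SemidirectProduct.rightHom_inl, SemidirectProduct.rightHom_inr, one_mul] at h1
        exact h1.symm
      have hdvd : (Nn : ℤ) ∣ k * (i : ℤ) := by
        have h1 : k • ((i : ℕ) : ZMod Nn) = 0 := by
          have h2 : Multiplicative.toAdd (si ^ k) = 0 := by rw [hsk]; rfl
          rw [toAdd_zpow] at h2
          exact h2
        have h3 : ((k * (i : ℤ) : ℤ) : ZMod Nn) = 0 := by
          rw [← h1, zsmul_eq_mul]
          push_cast
          ring
        exact (ZMod.intCast_zmod_eq_zero_iff_dvd _ _).mp h3
      have hdpk : ((d * p : ℕ) : ℤ) ∣ k := by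
        have h1 : ((i : ℕ) : ℤ) * ((d * p : ℕ) : ℤ) ∣ ((i : ℕ) : ℤ) * k := by
          have h2 : ((i : ℕ) : ℤ) * ((d * p : ℕ) : ℤ) = (Nn : ℤ) := by
            rw [hNn]; push_cast; ring
          have h3 : ((i : ℕ) : ℤ) * k = k * (i : ℤ) := by ring
          rw [h2, h3]
          exact hdvd
        have hi0 : ((i : ℕ) : ℤ) ≠ 0 := by exact_mod_cast hi.ne'
        exact (mul_dvd_mul_iff_left hi0).mp h1
      have hgk : (SemidirectProduct.inl (red a) * SemidirectProduct.inr si :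
          (Multiplicative (Fin n → ZMod p)) ⋊[act] (Multiplicative (ZMod Nn))) ^ k = 1 := by
        refine orderOf_dvd_iff_zpow_eq_one.mp ?_
        exact dvd_trans (Int.natCast_dvd_natCast.mpr (orderOf_dvd_of_pow_eq_one hA)) hdpk
      show ψ (HNNExtension.of c) = 1
      rw [heq, hgk]
    · intro h
      rw [Set.mem_mul]
      exact ⟨1, SetLike.mem_coe.mpr (one_mem _), HNNExtension.of c,
        SetLike.mem_coe.mpr h, one_mul _⟩
  · intro h
    have h1 : ψ (HNNExtension.of b) = 1 := h
    rw [hψof] at h1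
    have h2 : red b = 1 := SemidirectProduct.inl_injective (by rw [h1, map_one])
    have h3 : redA (Multiplicative.toAdd b) = 0 := by
      rw [← hred_apply, h2]
      rfl
    have h4 := congrFun h3 j
    exact hpb ((ZMod.intCast_zmod_eq_zero_iff_dvd _ _).mp h4)
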